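/- Let \rho be a C^{\nu+2} real-valued function on an open convex set \Omega \subset \mathbb{C}^N \cong \mathbb{R}^{2N}, and let v_\nu(\zeta,z) = -\sum_{|\alpha| \le \nu} \frac{1}{\alpha!}\frac{\partial^\alpha\rho}{\partial\zeta^\alpha}(\zeta)(z-\zeta)^\alpha be the truncated holomorphic Taylor series in the Wirtinger derivatives. Then for each j, the function (\zeta,z) \mapsto \frac{\partial v_\nu}{\partial \zeta_j}(\zeta,z) (Wirtinger derivative in \zeta) satisfies \frac{\partial v_\nu}{\partial\zeta_j}(\zeta,z) = O(|\zeta - z|^\nu) locally uniformly on \Omega \times \Omega. -/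

import Mathlib

open Complex

noncomputable section

/-- Holomorphic Wirtinger derivative `∂f/∂ζ_j = ½(∂f/∂x_j - i ∂f/∂y_j)`. -/
def Wd {N : ℕ} (j : Fin N) (f : EuclideanSpace ℂ (Fin N) → ℂ)
    (ζ : EuclideanSpace ℂ (Fin N)) : ℂ :=
  (1 / 2 : ℂ) * (fderiv ℝ f ζ (EuclideanSpace.single j 1)
    - Complex.I * fderiv ℝ f ζ (EuclideanSpace.single j Complex.I))

/-- Iterated holomorphic Wirtinger derivative along a list of directions. -/
def WdList {N : ℕ} (l : List (Fin N)) (f : EuclideanSpace ℂ (Fin N) → ℂ) :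
    EuclideanSpace ℂ (Fin N) → ℂ :=
  l.foldr (fun j g => Wd j g) f

/-- The multi-index Wirtinger derivative `∂^α/∂ζ^α`. -/
def WdPow {N : ℕ} (α : Fin N → ℕ) (f : EuclideanSpace ℂ (Fin N) → ℂ) :
    EuclideanSpace ℂ (Fin N) → ℂ :=
  WdList ((List.finRange N).flatMap fun j => List.replicate (α j) j) f

/-- The truncated holomorphic Taylor polynomial
`v_ν(ζ,z) = -∑_{|α| ≤ ν} (1/α!) ∂^αρ/∂ζ^α(ζ) (z-ζ)^α`. -/
def truncTaylor {N : ℕ} (ν : ℕ) (ρ : EuclideanSpace ℂ (Fin N) → ℝ)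
    (ζ z : EuclideanSpace ℂ (Fin N)) : ℂ :=
  -∑ α ∈ (Finset.univ : Finset (Fin N → Fin (ν + 1))).filter
      (fun α => ∑ j, (α j : ℕ) ≤ ν),
    (1 / (∏ j, ((α j : ℕ).factorial : ℂ))) *
      WdPow (fun j => (α j : ℕ)) (fun x => (ρ x : ℂ)) ζ *
      ∏ j, (z j - ζ j) ^ (α j : ℕ)


variable {N : ℕ}
abbrev E (N : ℕ) := EuclideanSpace ℂ (Fin N)

theorem wd_const (j : Fin N) (c : ℂ) (ζ : E N) : Wd j (fun _ => c) ζ = 0 := by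
  simp [Wd]

theorem wd_add (j : Fin N) {f g : E N → ℂ} {ζ : E N} (hf : DifferentiableAt ℝ f ζ)
    (hg : DifferentiableAt ℝ g ζ) :
    Wd j (fun w => f w + g w) ζ = Wd j f ζ + Wd j g ζ := by
  simp only [Wd, fderiv_fun_add hf hg]
  simp only [ContinuousLinearMap.add_apply]
  ring

theorem wd_mul (j : Fin N) {f g : E N → ℂ} {ζ : E N} (hf : DifferentiableAt ℝ f ζ)
    (hg : DifferentiableAt ℝ g ζ) :
    Wd j (fun w => f w * g w) ζ = Wd j f ζ * g ζ + f ζ * Wd j g ζ := by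
  simp only [Wd, fderiv_fun_mul hf hg]
  simp only [ContinuousLinearMap.add_apply, ContinuousLinearMap.smul_apply, smul_eq_mul]
  ring

theorem wd_const_mul (j : Fin N) {f : E N → ℂ} {ζ : E N} (c : ℂ)
    (hf : DifferentiableAt ℝ f ζ) :
    Wd j (fun w => c * f w) ζ = c * Wd j f ζ := by
  rw [wd_mul j (differentiableAt_const c) hf, wd_const]; ring

theorem wd_sum (j : Fin N) {ι : Type*} (s : Finset ι) {f : ι → E N → ℂ} {ζ : E N}
    (hf : ∀ i ∈ s, DifferentiableAt ℝ (f i) ζ) :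
    Wd j (fun w => ∑ i ∈ s, f i w) ζ = ∑ i ∈ s, Wd j (f i) ζ := by
  classical
  induction s using Finset.induction with
  | empty => simp [wd_const]
  | @insert a s h ih =>
    rw [Finset.sum_insert h]
    simp only [Finset.sum_insert h]
    rw [wd_add j (hf a (Finset.mem_insert_self a s))
      (DifferentiableAt.fun_sum fun i hi => hf i (Finset.mem_insert_of_mem hi)),
      ih fun i hi => hf i (Finset.mem_insert_of_mem hi)]

theorem wd_neg (j : Fin N) {f : E N → ℂ} {ζ : E N} (hf : DifferentiableAt ℝ f ζ) :
    Wd j (fun w => -f w) ζ = -Wd j f ζ := by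
  have := wd_const_mul j (-1 : ℂ) hf
  simpa using this

theorem wd_coord (j k : Fin N) (z : E N) (ζ : E N) :
    Wd j (fun w => z k - w k) ζ = -(if k = j then 1 else 0) := by
  have h : (fun w : E N => z k - w k) = fun w => z k - (EuclideanSpace.proj k : E N →L[ℂ] ℂ) w := rfl
  have hd : fderiv ℝ (fun w : E N => z k - w k) ζ
      = -((EuclideanSpace.proj k : E N →L[ℂ] ℂ).restrictScalars ℝ : E N →L[ℝ] ℂ) := by
    rw [h]
    rw [fderiv_const_sub]
    congr 1
    exact (((EuclideanSpace.proj k : E N →L[ℂ] ℂ).restrictScalars ℝ).fderiv)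
  simp only [Wd, hd, ContinuousLinearMap.neg_apply, ContinuousLinearMap.coe_restrictScalars']
  have h1 : (EuclideanSpace.proj k : E N →L[ℂ] ℂ) (EuclideanSpace.single j (1:ℂ))
      = if k = j then 1 else 0 := by
    simp [EuclideanSpace.single_apply]
  have h2 : (EuclideanSpace.proj k : E N →L[ℂ] ℂ) (EuclideanSpace.single j Complex.I)
      = if k = j then Complex.I else 0 := by
    simp [EuclideanSpace.single_apply]
  rw [h1, h2]
  by_cases hkj : k = j <;> simp [hkj] <;> ring_nf <;> simp [Complex.I_sq] <;> ring

theorem diff_finprod {ι : Type*} (s : Finset ι) (f : ι → E N → ℂ) {ζ : E N}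
    (h : ∀ i ∈ s, DifferentiableAt ℝ (f i) ζ) :
    DifferentiableAt ℝ (fun w => ∏ i ∈ s, f i w) ζ := by
  classical
  induction s using Finset.induction with
  | empty => simpa using differentiableAt_const (1:ℂ)
  | @insert a s ha ih =>
    simp only [Finset.prod_insert ha]
    exact (h a (Finset.mem_insert_self a s)).mul
      (ih fun i hi => h i (Finset.mem_insert_of_mem hi))

theorem diff_coord (k : Fin N) (z : E N) (ζ : E N) :
    DifferentiableAt ℝ (fun w : E N => z k - w k) ζ := by
  apply DifferentiableAt.const_sub
  exact (((EuclideanSpace.proj k : E N →L[ℂ] ℂ).restrictScalars ℝ)).differentiableAt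

theorem diff_coord_pow (k : Fin N) (m : ℕ) (z : E N) (ζ : E N) :
    DifferentiableAt ℝ (fun w : E N => (z k - w k) ^ m) ζ :=
  (diff_coord k z ζ).pow m

theorem diff_mono (γ : Fin N → ℕ) (z : E N) (ζ : E N) :
    DifferentiableAt ℝ (fun w : E N => ∏ k, (z k - w k) ^ (γ k)) ζ :=
  diff_finprod Finset.univ _ fun k _ => diff_coord_pow k (γ k) z ζ

theorem wd_coord_pow (j k : Fin N) (m : ℕ) (z : E N) (ζ : E N) :
    Wd j (fun w => (z k - w k) ^ m) ζ
      = -(if k = j then (m : ℂ) * (z k - ζ k) ^ (m - 1) else 0) := by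
  induction m with
  | zero => simpa using wd_const j 1 ζ
  | succ m ih =>
    have : (fun w : E N => (z k - w k) ^ (m+1)) = fun w => (z k - w k) * (z k - w k) ^ m := by
      funext w; ring
    rw [this, wd_mul j (diff_coord k z ζ) (diff_coord_pow k m z ζ), ih, wd_coord]
    by_cases hkj : k = j
    · simp only [hkj, if_true]
      push_cast
      rcases Nat.eq_zero_or_pos m with hm | hm
      · subst hm; simp
      · have h1 : m - 1 + 1 = m := Nat.succ_pred_eq_of_pos hm
        have : (z k - ζ k) * (z k - ζ k) ^ (m - 1) = (z k - ζ k) ^ m := by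
          rw [← pow_succ', h1]
        have h2 : (z k - ζ k) * ((m:ℂ) * (z k - ζ k) ^ (m - 1)) = (m:ℂ) * (z k - ζ k) ^ m := by
          rw [mul_left_comm, this]
        rw [← hkj]
        rw [show (z k - ζ k) * -((m:ℂ) * (z k - ζ k) ^ (m - 1))
          = -((z k - ζ k) * ((m:ℂ) * (z k - ζ k) ^ (m - 1))) by ring, h2]
        ring
    · simp [hkj]

theorem wd_prod (j : Fin N) {ι : Type*} [DecidableEq ι] (s : Finset ι) (f : ι → E N → ℂ)
    {ζ : E N} (hf : ∀ i ∈ s, DifferentiableAt ℝ (f i) ζ) :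
    Wd j (fun w => ∏ i ∈ s, f i w) ζ
      = ∑ i ∈ s, Wd j (f i) ζ * ∏ l ∈ s.erase i, f l ζ := by
  induction s using Finset.induction with
  | empty => simpa using wd_const j 1 ζ
  | @insert a s ha ih =>
    have hfa := hf a (Finset.mem_insert_self a s)
    have hfs : ∀ i ∈ s, DifferentiableAt ℝ (f i) ζ :=
      fun i hi => hf i (Finset.mem_insert_of_mem hi)
    have hps : DifferentiableAt ℝ (fun w => ∏ i ∈ s, f i w) ζ :=
      diff_finprod s f hfs
    simp only [Finset.prod_insert ha]
    rw [wd_mul j hfa hps, ih hfs, Finset.sum_insert ha, Finset.erase_insert ha,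
      Finset.mul_sum]
    congr 1
    apply Finset.sum_congr rfl
    intro i hi
    have hia : i ≠ a := fun h => ha (h ▸ hi)
    rw [Finset.erase_insert_of_ne (Ne.symm hia), Finset.prod_insert (fun h => ha (Finset.mem_of_mem_erase h))]
    ring

theorem wd_mono (j : Fin N) (γ : Fin N → ℕ) (z : E N) (ζ : E N) :
    Wd j (fun w => ∏ k, (z k - w k) ^ (γ k)) ζ
      = -(γ j : ℂ) * ∏ k, (z k - ζ k) ^ (Function.update γ j (γ j - 1) k) := by
  rw [wd_prod j Finset.univ _ (fun k _ => diff_coord_pow k (γ k) z ζ)]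
  rw [Finset.sum_eq_single j]
  · rw [wd_coord_pow]
    simp only [if_true]
    rw [← Finset.mul_prod_erase Finset.univ _ (Finset.mem_univ j)]
    simp only [Function.update_self]
    have : ∀ k ∈ Finset.univ.erase j,
        (z k - ζ k) ^ (Function.update γ j (γ j - 1) k) = (z k - ζ k) ^ (γ k) := by
      intro k hk
      rw [Function.update_of_ne (Finset.ne_of_mem_erase hk)]
    rw [Finset.prod_congr rfl this]
    ring
  · intro k _ hkj
    rw [wd_coord_pow]
    simp [hkj]
  · intro h; exact absurd (Finset.mem_univ j) h

theorem contDiffOn_wd {Ω : Set (E N)} (hΩ : IsOpen Ω) (j : Fin N) {f : E N → ℂ} {m : ℕ}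
    (hf : ContDiffOn ℝ (m + 1 : ℕ) f Ω) : ContDiffOn ℝ (m : ℕ) (Wd j f) Ω := by
  have hd : ContDiffOn ℝ (m : ℕ) (fun ζ => fderiv ℝ f ζ) Ω := by
    apply hf.fderiv_of_isOpen hΩ
    norm_cast
  have h1 : ContDiffOn ℝ (m : ℕ) (fun ζ => fderiv ℝ f ζ (EuclideanSpace.single j 1)) Ω :=
    hd.clm_apply contDiffOn_const
  have h2 : ContDiffOn ℝ (m : ℕ) (fun ζ => fderiv ℝ f ζ (EuclideanSpace.single j Complex.I)) Ω :=
    hd.clm_apply contDiffOn_const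
  exact (contDiffOn_const).mul (h1.sub (contDiffOn_const.mul h2))

theorem fderiv_wd_apply {f : E N → ℂ} {ζ : E N} (hf : ContDiffAt ℝ 2 f ζ) (b : Fin N) (v : E N) :
    fderiv ℝ (Wd b f) ζ v = (1 / 2 : ℂ) *
      (fderiv ℝ (fderiv ℝ f) ζ v (EuclideanSpace.single b 1)
        - Complex.I * fderiv ℝ (fderiv ℝ f) ζ v (EuclideanSpace.single b Complex.I)) := by
  set f' := fderiv ℝ f with hf'
  have hdiff : DifferentiableAt ℝ f' ζ := by
    have := hf.fderiv_right (m := 1) (by norm_num)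
    exact this.differentiableAt (by norm_num)
  have key : ∀ v0 : E N, fderiv ℝ (fun y => f' y v0) ζ v
      = fderiv ℝ f' ζ v v0 := by
    intro v0
    rw [fderiv_clm_apply hdiff (differentiableAt_const v0)]
    simp
  have d1 : DifferentiableAt ℝ (fun y => f' y (EuclideanSpace.single b 1)) ζ :=
    hdiff.clm_apply (differentiableAt_const _)
  have d2 : DifferentiableAt ℝ (fun y => f' y (EuclideanSpace.single b Complex.I)) ζ :=
    hdiff.clm_apply (differentiableAt_const _)
  have : Wd b f = fun y => (1 / 2 : ℂ) * ((fun y => f' y (EuclideanSpace.single b 1)) y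
      - Complex.I * (fun y => f' y (EuclideanSpace.single b Complex.I)) y) := rfl
  rw [this, fderiv_const_mul (d1.fun_sub (d2.const_mul _)), fderiv_fun_sub d1 (d2.const_mul _),
    fderiv_const_mul d2]
  simp only [ContinuousLinearMap.smul_apply, ContinuousLinearMap.sub_apply, smul_eq_mul]
  rw [key, key]

theorem wd_comm {f : E N → ℂ} {ζ : E N} (hf : ContDiffAt ℝ 2 f ζ) (a b : Fin N) :
    Wd a (Wd b f) ζ = Wd b (Wd a f) ζ := by
  have hsymm := hf.isSymmSndFDerivAt (by norm_num)
  simp only [Wd]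
  rw [fderiv_wd_apply hf b, fderiv_wd_apply hf b, fderiv_wd_apply hf a, fderiv_wd_apply hf a]
  rw [hsymm (EuclideanSpace.single a 1) (EuclideanSpace.single b 1),
    hsymm (EuclideanSpace.single a 1) (EuclideanSpace.single b Complex.I),
    hsymm (EuclideanSpace.single a Complex.I) (EuclideanSpace.single b 1),
    hsymm (EuclideanSpace.single a Complex.I) (EuclideanSpace.single b Complex.I)]
  ring

theorem wdList_cons (j : Fin N) (l : List (Fin N)) (f : E N → ℂ) :
    WdList (j :: l) f = Wd j (WdList l f) := rfl

theorem wd_congr {f g : E N → ℂ} {ζ : E N} (j : Fin N) (h : f =ᶠ[nhds ζ] g) :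
    Wd j f ζ = Wd j g ζ := by
  simp only [Wd, h.fderiv_eq]

theorem contDiffOn_wdList {Ω : Set (E N)} (hΩ : IsOpen Ω) (l : List (Fin N)) {f : E N → ℂ}
    {m : ℕ} (hf : ContDiffOn ℝ (m + l.length : ℕ) f Ω) :
    ContDiffOn ℝ (m : ℕ) (WdList l f) Ω := by
  induction l generalizing m with
  | nil => simpa [WdList] using hf
  | cons j l ih =>
    rw [wdList_cons]
    apply contDiffOn_wd hΩ
    apply ih
    have : m + 1 + l.length = m + (j :: l).length := by simp [List.length_cons]; ring
    rw [this]
    exact hf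

theorem wdList_congr_on {Ω : Set (E N)} (hΩ : IsOpen Ω) (l : List (Fin N)) {f g : E N → ℂ}
    (h : ∀ x ∈ Ω, f x = g x) : ∀ ζ ∈ Ω, WdList l f ζ = WdList l g ζ := by
  induction l with
  | nil => exact h
  | cons j l ih =>
    intro ζ hζ
    rw [wdList_cons, wdList_cons]
    apply wd_congr
    filter_upwards [hΩ.mem_nhds hζ] with x hx using ih x hx

theorem wdList_perm {Ω : Set (E N)} (hΩ : IsOpen Ω) {f : E N → ℂ} {n : ℕ}
    (hf : ContDiffOn ℝ (n : ℕ) f Ω) {l l' : List (Fin N)} (hp : l.Perm l')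
    (hlen : l.length ≤ n) : ∀ ζ ∈ Ω, WdList l f ζ = WdList l' f ζ := by
  induction hp with
  | nil => intro ζ _; rfl
  | cons x hp ih =>
    rename_i l l'
    intro ζ hζ
    rw [wdList_cons, wdList_cons]
    apply wd_congr
    filter_upwards [hΩ.mem_nhds hζ] with y hy
    exact ih (by simpa using Nat.le_of_succ_le hlen) y hy
  | swap x y l =>
    intro ζ hζ
    have hg : ContDiffOn ℝ (2 : ℕ) (WdList l f) Ω := by
      apply contDiffOn_wdList hΩ
      apply hf.of_le
      norm_cast
      simp only [List.length_cons] at hlen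
      omega
    have hgat : ContDiffAt ℝ 2 (WdList l f) ζ :=
      (hg ζ hζ).contDiffAt (hΩ.mem_nhds hζ)
    have := wd_comm hgat y x
    simpa [wdList_cons] using this
  | trans h12 h23 ih12 ih23 =>
    intro ζ hζ
    rw [ih12 hlen ζ hζ, ih23 (h12.length_eq ▸ hlen) ζ hζ]

theorem mIdxList_length (γ : Fin N → ℕ) :
    ((List.finRange N).flatMap fun j => List.replicate (γ j) j).length = ∑ j, γ j := by
  rw [List.length_flatMap, Fin.sum_univ_def]
  simp [Function.comp_def]

theorem mIdxList_count (γ : Fin N → ℕ) (k : Fin N) :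
    ((List.finRange N).flatMap fun j => List.replicate (γ j) j).count k = γ k := by
  rw [List.count_flatMap,
    ← Fin.sum_univ_def (fun i => (List.count k ∘ fun j => List.replicate (γ j) j) i)]
  rw [Finset.sum_eq_single k]
  · simp
  · intro b _ hbk
    simp [List.count_replicate, Ne.symm hbk, hbk]
  · intro h; exact absurd (Finset.mem_univ k) h

theorem contDiffOn_wdPow {Ω : Set (E N)} (hΩ : IsOpen Ω) (γ : Fin N → ℕ) {f : E N → ℂ}
    {m : ℕ} (hf : ContDiffOn ℝ (m + ∑ j, γ j : ℕ) f Ω) :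
    ContDiffOn ℝ (m : ℕ) (WdPow γ f) Ω := by
  apply contDiffOn_wdList hΩ
  rwa [mIdxList_length]

theorem wd_wdPow {Ω : Set (E N)} (hΩ : IsOpen Ω) {f : E N → ℂ} {n : ℕ}
    (hf : ContDiffOn ℝ (n : ℕ) f Ω) (γ : Fin N → ℕ) (j : Fin N)
    (hn : ∑ k, γ k + 1 ≤ n) :
    ∀ ζ ∈ Ω, Wd j (WdPow γ f) ζ = WdPow (Function.update γ j (γ j + 1)) f ζ := by
  intro ζ hζ
  have hperm : (j :: (List.finRange N).flatMap fun k => List.replicate (γ k) k).Perm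
      ((List.finRange N).flatMap fun k => List.replicate (Function.update γ j (γ j + 1) k) k) := by
    rw [List.perm_iff_count]
    intro a
    rw [List.count_cons, mIdxList_count, mIdxList_count]
    by_cases haj : a = j
    · subst haj; simp [Function.update_self]
    · simp [haj, Ne.symm haj, Function.update_of_ne haj]
  have := wdList_perm hΩ hf hperm (by rw [List.length_cons, mIdxList_length]; exact hn) ζ hζ
  exact this

/-- The set of multi-indices of weight at most ν, as natural-valued functions. -/
def mSet (N ν : ℕ) : Finset (Fin N → ℕ) :=
  ((Finset.univ : Finset (Fin N → Fin (ν+1))).filter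
    (fun α => ∑ j, (α j : ℕ) ≤ ν)).image (fun α k => (α k : ℕ))

theorem mem_mSet {ν : ℕ} {γ : Fin N → ℕ} : γ ∈ mSet N ν ↔ ∑ k, γ k ≤ ν := by
  constructor
  · rintro h
    simp only [mSet, Finset.mem_image, Finset.mem_filter] at h
    obtain ⟨α, ⟨_, hα⟩, rfl⟩ := h
    exact hα
  · intro h
    have hk : ∀ k, γ k < ν + 1 := by
      intro k
      have : γ k ≤ ∑ i, γ i := Finset.single_le_sum (fun i _ => Nat.zero_le _) (Finset.mem_univ k)
      omega
    refine Finset.mem_image.mpr ⟨fun k => ⟨γ k, hk k⟩, ?_, rfl⟩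
    simpa using h

theorem sum_mSet {ν : ℕ} (F : (Fin N → ℕ) → ℂ) :
    ∑ α ∈ (Finset.univ : Finset (Fin N → Fin (ν+1))).filter
      (fun α => ∑ j, (α j : ℕ) ≤ ν), F (fun k => (α k : ℕ)) = ∑ γ ∈ mSet N ν, F γ := by
  rw [mSet, Finset.sum_image]
  intro α _ β _ h
  funext k
  have := congrFun h k
  exact Fin.val_injective this

theorem truncTaylor_eq (ν : ℕ) (ρ : E N → ℝ) (z ζ : E N) :
    truncTaylor ν ρ ζ z = -∑ γ ∈ mSet N ν,
      (1 / (∏ k, ((γ k).factorial : ℂ))) * WdPow γ (fun x => (ρ x : ℂ)) ζ *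
        ∏ k, (z k - ζ k) ^ (γ k) := by
  rw [truncTaylor, ← sum_mSet (fun γ => (1 / (∏ k, ((γ k).factorial : ℂ))) *
    WdPow γ (fun x => (ρ x : ℂ)) ζ * ∏ k, (z k - ζ k) ^ (γ k))]

theorem fact_prod_update {γ : Fin N → ℕ} (j : Fin N) (hj : γ j ≠ 0) :
    (∏ k, ((γ k).factorial : ℂ))
      = (γ j : ℂ) * ∏ k, (((Function.update γ j (γ j - 1) k).factorial : ℂ)) := by
  rw [← Finset.mul_prod_erase Finset.univ _ (Finset.mem_univ j),
    ← Finset.mul_prod_erase Finset.univ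
      (fun k => (((Function.update γ j (γ j - 1) k).factorial : ℂ))) (Finset.mem_univ j)]
  have h1 : ∀ k ∈ Finset.univ.erase j,
      (((Function.update γ j (γ j - 1) k).factorial : ℂ)) = ((γ k).factorial : ℂ) := by
    intro k hk; rw [Function.update_of_ne (Finset.ne_of_mem_erase hk)]
  rw [Finset.prod_congr rfl h1, Function.update_self]
  have h2 : (γ j).factorial = γ j * (γ j - 1).factorial := by
    obtain ⟨m, hm⟩ := Nat.exists_eq_succ_of_ne_zero hj
    rw [hm]; simp [Nat.factorial_succ]
  rw [h2]; push_cast; ring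

theorem wd_truncTaylor {Ω : Set (E N)} (hΩ : IsOpen Ω) {ν : ℕ} {ρ : E N → ℝ}
    (hρC : ContDiffOn ℝ (ν + 2 : ℕ) (fun x => (ρ x : ℂ)) Ω) (j : Fin N) (z : E N)
    {ζ : E N} (hζ : ζ ∈ Ω) :
    Wd j (fun w => truncTaylor ν ρ w z) ζ
      = -∑ γ ∈ (mSet N ν).filter (fun γ => ∑ k, γ k = ν),
          (1 / (∏ k, ((γ k).factorial : ℂ))) *
            WdPow (Function.update γ j (γ j + 1)) (fun x => (ρ x : ℂ)) ζ *
            ∏ k, (z k - ζ k) ^ (γ k) := by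
  classical
  set ρ' : E N → ℂ := fun x => (ρ x : ℂ) with hρ'
  set cfac : (Fin N → ℕ) → ℂ := fun γ => 1 / (∏ k, ((γ k).factorial : ℂ)) with hcfac
  set D : (Fin N → ℕ) → E N → ℂ := fun γ => WdPow γ ρ' with hD
  set M : (Fin N → ℕ) → E N → ℂ := fun γ w => ∏ k, (z k - w k) ^ (γ k) with hM
  set up : (Fin N → ℕ) → (Fin N → ℕ) := fun γ => Function.update γ j (γ j + 1) with hup
  set dn : (Fin N → ℕ) → (Fin N → ℕ) := fun γ => Function.update γ j (γ j - 1) with hdn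
  -- differentiability facts
  have hDd : ∀ γ ∈ mSet N ν, DifferentiableAt ℝ (D γ) ζ := by
    intro γ hγ
    have hγν := mem_mSet.1 hγ
    have h1 : ContDiffOn ℝ (1 : ℕ) (D γ) Ω := by
      apply contDiffOn_wdPow hΩ
      apply hρC.of_le
      norm_cast
      omega
    exact ((h1 ζ hζ).contDiffAt (hΩ.mem_nhds hζ)).differentiableAt (by norm_num)
  have hTd : ∀ γ ∈ mSet N ν,
      DifferentiableAt ℝ (fun w => cfac γ * D γ w * M γ w) ζ := by
    intro γ hγ
    exact ((differentiableAt_const _).mul (hDd γ hγ)).mul (diff_mono γ z ζ)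
  -- rewrite the function
  have hfun : (fun w => truncTaylor ν ρ w z)
      = fun w => -∑ γ ∈ mSet N ν, cfac γ * D γ w * M γ w := by
    funext w
    exact truncTaylor_eq ν ρ z w
  rw [hfun]
  rw [wd_neg j (DifferentiableAt.fun_sum hTd), wd_sum j _ hTd]
  -- per-term formula
  have hterm : ∀ γ ∈ mSet N ν, Wd j (fun w => cfac γ * D γ w * M γ w) ζ
      = cfac γ * D (up γ) ζ * M γ ζ
        + cfac γ * D γ ζ * (-(γ j : ℂ) * M (dn γ) ζ) := by
    intro γ hγ
    have hγν := mem_mSet.1 hγ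
    have h1 : Wd j (fun w => (fun w => cfac γ * D γ w) w * M γ w) ζ
        = Wd j (fun w => cfac γ * D γ w) ζ * M γ ζ
          + (cfac γ * D γ ζ) * Wd j (M γ) ζ :=
      wd_mul j ((differentiableAt_const _).mul (hDd γ hγ)) (diff_mono γ z ζ)
    rw [h1, wd_const_mul j _ (hDd γ hγ),
      wd_wdPow hΩ hρC γ j (by omega) ζ hζ]
    have h2 : Wd j (M γ) ζ = -(γ j : ℂ) * M (dn γ) ζ := wd_mono j γ z ζ
    rw [h2]
  rw [Finset.sum_congr rfl hterm, Finset.sum_add_distrib]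
  -- reindex the second sum
  have hS2 : ∑ γ ∈ mSet N ν, cfac γ * D γ ζ * (-(γ j : ℂ) * M (dn γ) ζ)
      = -∑ β ∈ (mSet N ν).filter (fun β => ∑ k, β k < ν),
          cfac β * D (up β) ζ * M β ζ := by
    rw [← Finset.sum_filter_of_ne
      (p := fun γ => γ j ≠ 0) (f := fun γ => cfac γ * D γ ζ * (-(γ j : ℂ) * M (dn γ) ζ))
      (fun γ _ hne => by
        intro h0
        exact hne (by simp [h0]))]
    rw [← Finset.sum_neg_distrib]
    apply Finset.sum_nbij' dn up
    · -- dn maps into filter < ν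
      intro γ hγ
      simp only [Finset.mem_filter] at hγ ⊢
      obtain ⟨hγm, hγj⟩ := hγ
      have hγν := mem_mSet.1 hγm
      have hsum : ∑ k, dn γ k = ∑ k, γ k - 1 := by
        rw [hdn]
        rw [Finset.sum_update_of_mem (Finset.mem_univ j),
          ← Finset.add_sum_erase Finset.univ γ (Finset.mem_univ j), Finset.erase_eq]
        omega
      constructor
      · exact mem_mSet.2 (by omega)
      · have : γ j ≤ ∑ k, γ k := Finset.single_le_sum (fun i _ => Nat.zero_le _) (Finset.mem_univ j)
        omega
    · -- up maps into filter (j-th ≠ 0)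
      intro β hβ
      simp only [Finset.mem_filter] at hβ ⊢
      obtain ⟨hβm, hβν⟩ := hβ
      have hβs := mem_mSet.1 hβm
      have hsum : ∑ k, up β k = ∑ k, β k + 1 := by
        rw [hup]
        rw [Finset.sum_update_of_mem (Finset.mem_univ j),
          ← Finset.add_sum_erase Finset.univ β (Finset.mem_univ j), Finset.erase_eq]
        omega
      exact ⟨mem_mSet.2 (by omega), by simp [hup]⟩
    · -- left inverse
      intro γ hγ
      simp only [Finset.mem_filter] at hγ
      funext k
      by_cases hk : k = j
      · subst hk
        simp [hup, hdn]
        omega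
      · simp [hup, hdn, Function.update_of_ne hk]
    · -- right inverse
      intro β _
      funext k
      by_cases hk : k = j
      · subst hk; simp [hup, hdn]
      · simp [hup, hdn, Function.update_of_ne hk]
    · -- term equality
      intro γ hγ
      simp only [Finset.mem_filter] at hγ
      obtain ⟨hγm, hγj⟩ := hγ
      have hud : up (dn γ) = γ := by
        funext k
        by_cases hk : k = j
        · subst hk; simp [hup, hdn]; omega
        · simp [hup, hdn, Function.update_of_ne hk]
      rw [hud]
      have hc : (γ j : ℂ) * cfac γ = cfac (dn γ) := by
        rw [hcfac]
        simp only
        rw [fact_prod_update j hγj]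
        have hne1 : ((γ j : ℂ)) ≠ 0 := Nat.cast_ne_zero.2 hγj
        have hne2 : (∏ k, (((dn γ k).factorial : ℂ))) ≠ 0 :=
          Finset.prod_ne_zero_iff.2 fun k _ => Nat.cast_ne_zero.2 (Nat.factorial_ne_zero _)
        field_simp
        exact div_self hne2
      rw [← hc]
      ring
  rw [hS2]
  -- combine
  rw [← Finset.sum_filter_add_sum_filter_not (mSet N ν) (fun γ => ∑ k, γ k < ν)
    (fun γ => cfac γ * D (up γ) ζ * M γ ζ)]
  have hfe : (mSet N ν).filter (fun γ => ¬ ∑ k, γ k < ν)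
      = (mSet N ν).filter (fun γ => ∑ k, γ k = ν) := by
    apply Finset.filter_congr
    intro γ hγ
    have := mem_mSet.1 hγ
    constructor <;> (intro h; omega)
  rw [hfe]
  ring

theorem coord_norm_le (x : E N) (k : Fin N) : ‖x k‖ ≤ ‖x‖ := by
  rw [EuclideanSpace.norm_eq]
  rw [show ‖x k‖ = Real.sqrt (‖x k‖ ^ 2) from (Real.sqrt_sq (norm_nonneg _)).symm]
  apply Real.sqrt_le_sqrt
  exact Finset.single_le_sum (f := fun i => ‖x i‖ ^ 2) (fun i _ => sq_nonneg _)
    (Finset.mem_univ k)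


/-- For `ρ` of class `C^{ν+2}` on an open convex set `Ω ⊂ ℂ^N`, the Wirtinger
`ζ`-derivative of the truncated Taylor series `v_ν` satisfies
`∂v_ν/∂ζ_j(ζ,z) = O(|ζ-z|^ν)` locally uniformly on `Ω × Ω`. -/
theorem stmt5 (N : ℕ) (Ω : Set (EuclideanSpace ℂ (Fin N))) (hΩo : IsOpen Ω)
    (hΩc : Convex ℝ Ω) (ν : ℕ) (ρ : EuclideanSpace ℂ (Fin N) → ℝ)
    (hρ : ContDiffOn ℝ (ν + 2 : ℕ) ρ Ω) (j : Fin N)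
    (K : Set (EuclideanSpace ℂ (Fin N))) (hK : IsCompact K) (hKΩ : K ⊆ Ω) :
    ∃ C > 0, ∀ ζ ∈ K, ∀ z ∈ K,
      ‖Wd j (fun w => truncTaylor ν ρ w z) ζ‖ ≤ C * ‖ζ - z‖ ^ ν := by
  classical
  set ρ' : E N → ℂ := fun x => (ρ x : ℂ) with hρ'
  have hρC : ContDiffOn ℝ (ν + 2 : ℕ) ρ' Ω :=
    Complex.ofRealCLM.contDiff.comp_contDiffOn hρ
  set Fν := (mSet N ν).filter (fun γ => ∑ k, γ k = ν) with hFν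
  set G : E N → ℝ := fun ζ => ∑ γ ∈ Fν,
    ‖(1 / (∏ k, ((γ k).factorial : ℂ))) *
      WdPow (Function.update γ j (γ j + 1)) ρ' ζ‖ with hG
  have hGcont : ContinuousOn G Ω := by
    apply continuousOn_finset_sum
    intro γ hγ
    apply ContinuousOn.norm
    apply ContinuousOn.mul continuousOn_const
    have hγν : ∑ k, γ k = ν := (Finset.mem_filter.1 hγ).2
    have hsum : ∑ k, Function.update γ j (γ j + 1) k = ν + 1 := by
      rw [Finset.sum_update_of_mem (Finset.mem_univ j),
        ← Finset.add_sum_erase Finset.univ γ (Finset.mem_univ j), Finset.erase_eq] at *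
      omega
    have : ContDiffOn ℝ (0 : ℕ) (WdPow (Function.update γ j (γ j + 1)) ρ') Ω := by
      apply contDiffOn_wdPow hΩo
      apply hρC.of_le
      norm_cast
      omega
    exact this.continuousOn
  obtain ⟨C0, hC0⟩ := hK.exists_bound_of_continuousOn (hGcont.mono hKΩ)
  refine ⟨max C0 0 + 1, by positivity, ?_⟩
  intro ζ hζ z hz
  rw [wd_truncTaylor hΩo hρC j z (hKΩ hζ)]
  rw [norm_neg]
  calc ‖∑ γ ∈ Fν, (1 / (∏ k, ((γ k).factorial : ℂ))) *
        WdPow (Function.update γ j (γ j + 1)) ρ' ζ * ∏ k, (z k - ζ k) ^ (γ k)‖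
      ≤ ∑ γ ∈ Fν, ‖(1 / (∏ k, ((γ k).factorial : ℂ))) *
        WdPow (Function.update γ j (γ j + 1)) ρ' ζ * ∏ k, (z k - ζ k) ^ (γ k)‖ :=
        norm_sum_le _ _
    _ ≤ ∑ γ ∈ Fν, ‖(1 / (∏ k, ((γ k).factorial : ℂ))) *
        WdPow (Function.update γ j (γ j + 1)) ρ' ζ‖ * ‖ζ - z‖ ^ ν := by
        apply Finset.sum_le_sum
        intro γ hγ
        rw [norm_mul]
        apply mul_le_mul_of_nonneg_left _ (norm_nonneg _)
        have hγν : ∑ k, γ k = ν := (Finset.mem_filter.1 hγ).2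
        calc ‖∏ k, (z k - ζ k) ^ (γ k)‖ = ∏ k, ‖z k - ζ k‖ ^ (γ k) := by
              rw [norm_prod]
              simp [norm_pow]
          _ ≤ ∏ k, ‖ζ - z‖ ^ (γ k) := by
              apply Finset.prod_le_prod
              · intro k _; positivity
              · intro k _
                apply pow_le_pow_left₀ (norm_nonneg _)
                have : z k - ζ k = (z - ζ) k := by simp
                rw [this]
                calc ‖(z - ζ) k‖ ≤ ‖z - ζ‖ := coord_norm_le (z - ζ) k
                  _ = ‖ζ - z‖ := norm_sub_rev _ _
          _ = ‖ζ - z‖ ^ ν := by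
              rw [Finset.prod_pow_eq_pow_sum, hγν]
    _ = G ζ * ‖ζ - z‖ ^ ν := by rw [hG, Finset.sum_mul]
    _ ≤ (max C0 0 + 1) * ‖ζ - z‖ ^ ν := by
        apply mul_le_mul_of_nonneg_right _ (by positivity)
        have h1 : ‖G ζ‖ ≤ C0 := hC0 ζ hζ
        have h2 : G ζ ≤ ‖G ζ‖ := le_abs_self _
        have : C0 ≤ max C0 0 := le_max_left _ _
        linarith

end
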